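/- Let 1 ≤ l ≤ n, L = 2(n−l), and let f̄ : ℝ^{l+L} → ℝⁿ be continuous. Define f : ℝⁿ → ℝⁿ by f(x) = f̄(x₁,…,x_l, sin x_{l+1}, cos x_{l+1},…, sin x_n, cos x_n), and let b̄_{ij}, b_{ij}, C, the extended system on ℝ^{l+L}, and Ĉ be as follows: b_{ij}(x) = b̄_{ij}(x₁,…,x_l, sin x_{l+1}, cos x_{l+1},…, sin x_n, cos x_n) with b̄_{ij} continuous, C = ⋃_{i=1}^{s} ⋂_{j=1}^{r_i} {x : b_{ij}(x) ≥ 0}, the extended system is dx̂_i/dt = f̄_i(x̂,ŵ) for i ≤ l, dŵ_{2k−1}/dt = ŵ_{2k} f̄_{l+k}(x̂,ŵ), dŵ_{2k}/dt = −ŵ_{2k−1} f̄_{l+k}(x̂,ŵ), and Ĉ = (⋃_{i=1}^{s} ⋂_{j=1}^{r_i} {(x̂,ŵ) : b̄_{ij}(x̂,ŵ) ≥ 0}) ∩ ⋂_{k=1}^{n−l} {(x̂,ŵ) : ŵ_{2k−1}² + ŵ_{2k}² = 1}. If Ĉ is positive invariant for the extended system, then C is positive invariant for ẋ = f(x); indeed,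 every solution x(·) of ẋ = f(x) lifts to a solution (x̂(·), ŵ(·)) of the extended system with x̂_i = x_i (i ≤ l), ŵ_{2k−1} = sin x_{l+k}, ŵ_{2k} = cos x_{l+k}. -/

import Mathlib

/-- `D` is positive invariant for `ẋ = F(x)`: every solution defined on `[0, t]`
that starts in `D` stays in `D`. -/
def PosInvariant {E : Type*} [NormedAddCommGroup E] [NormedSpace ℝ E]
    (F : E → E) (D : Set E) : Prop :=
  ∀ (x : ℝ → E) (t : ℝ), 0 ≤ t →
    (∀ s ∈ Set.Icc 0 t, HasDerivAt x (F (x s)) s) → x 0 ∈ D → x t ∈ D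

/-- The lift `x ↦ (x₁,…,x_l, sin x_{l+1}, …, cos x_n)` of the state, with the
angular coordinates grouped as `(sines, cosines)`. -/
noncomputable def trigLift {l d : ℕ} (x : (Fin l → ℝ) × (Fin d → ℝ)) :
    (Fin l → ℝ) × (Fin d → ℝ) × (Fin d → ℝ) :=
  (x.1, fun k => Real.sin (x.2 k), fun k => Real.cos (x.2 k))

/-- The extended vector field on `ℝ^{l+L}`. -/
def extField {l d : ℕ}
    (fbar : (Fin l → ℝ) × (Fin d → ℝ) × (Fin d → ℝ) → (Fin l → ℝ) × (Fin d → ℝ)) :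
    (Fin l → ℝ) × (Fin d → ℝ) × (Fin d → ℝ) →
      (Fin l → ℝ) × (Fin d → ℝ) × (Fin d → ℝ) :=
  fun z => ((fbar z).1,
    fun k => z.2.2 k * (fbar z).2 k,
    fun k => -(z.2.1 k * (fbar z).2 k))

/-- for continuous `f̄`, if `Ĉ` is positive invariant for the extended
system then `C` is positive invariant for `ẋ = f(x)`; moreover every solution of
`ẋ = f(x)` lifts to a solution of the extended system. -/
theorem trig_invariance_of_extended {l d s : ℕ} (hl : 1 ≤ l) (r : Fin s → ℕ)
    (fbar : (Fin l → ℝ) × (Fin d → ℝ) × (Fin d → ℝ) → (Fin l → ℝ) × (Fin d → ℝ))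
    (hf : Continuous fbar)
    (bbar : (i : Fin s) → Fin (r i) → ((Fin l → ℝ) × (Fin d → ℝ) × (Fin d → ℝ)) → ℝ)
    (hb : ∀ i j, Continuous (bbar i j))
    (Cset : Set ((Fin l → ℝ) × (Fin d → ℝ)))
    (hC : Cset = ⋃ i : Fin s, ⋂ j : Fin (r i), {x | 0 ≤ bbar i j (trigLift x)})
    (Chat : Set ((Fin l → ℝ) × (Fin d → ℝ) × (Fin d → ℝ)))
    (hChat : Chat =
      (⋃ i : Fin s, ⋂ j : Fin (r i), {z | 0 ≤ bbar i j z}) ∩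
        (⋂ k : Fin d, {z | z.2.1 k ^ 2 + z.2.2 k ^ 2 = 1}))
    (hinv : PosInvariant (extField fbar) Chat) :
    PosInvariant (fun x => fbar (trigLift x)) Cset ∧
      ∀ (x : ℝ → (Fin l → ℝ) × (Fin d → ℝ)) (t : ℝ), 0 ≤ t →
        (∀ s' ∈ Set.Icc 0 t, HasDerivAt x (fbar (trigLift (x s'))) s') →
        ∀ s' ∈ Set.Icc 0 t,
          HasDerivAt (fun τ => trigLift (x τ)) (extField fbar (trigLift (x s'))) s' := by

  have key : ∀ (x : ℝ → (Fin l → ℝ) × (Fin d → ℝ)) (s' : ℝ),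
      HasDerivAt x (fbar (trigLift (x s'))) s' →
      HasDerivAt (fun τ => trigLift (x τ)) (extField fbar (trigLift (x s'))) s' := by
    intro x s' hx
    have h1 : HasDerivAt (fun τ => (x τ).1) (fbar (trigLift (x s'))).1 s' := hx.fst
    have h2 : HasDerivAt (fun τ => (x τ).2) (fbar (trigLift (x s'))).2 s' := hx.snd
    have h2k : ∀ k, HasDerivAt (fun τ => (x τ).2 k) ((fbar (trigLift (x s'))).2 k) s' :=
      fun k => hasDerivAt_pi.mp h2 k
    refine HasDerivAt.prodMk h1 (HasDerivAt.prodMk ?_ ?_)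
    · apply hasDerivAt_pi.mpr
      intro k
      have := (Real.hasDerivAt_sin ((x s').2 k)).comp s' (h2k k)
      simpa [extField, trigLift, Function.comp_def] using this
    · apply hasDerivAt_pi.mpr
      intro k
      have := (Real.hasDerivAt_cos ((x s').2 k)).comp s' (h2k k)
      simpa [extField, trigLift, neg_mul, Function.comp_def] using this
  constructor
  · intro x t ht hsol hx0
    have hlift : ∀ s' ∈ Set.Icc (0:ℝ) t,
        HasDerivAt (fun τ => trigLift (x τ)) (extField fbar (trigLift (x s'))) s' :=
      fun s' hs' => key x s' (hsol s' hs')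
    have h0 : trigLift (x 0) ∈ Chat := by
      rw [hChat]
      constructor
      · rw [hC] at hx0
        simpa using hx0
      · simp [trigLift, Real.sin_sq_add_cos_sq]
    have := hinv (fun τ => trigLift (x τ)) t ht hlift h0
    rw [hChat] at this
    rw [hC]
    simpa using this.1
  · intro x t ht hsol s' hs'
    exact key x s' (hsol s' hs')
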